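/- Assume a_1 ≤ a_2 ≤ … ≤ a_m ≤ 0 < a_{m+1} ≤ … ≤ a_{n−1} for some 1 ≤ m < n, and assume a_1 < 0. Then for every composition λ of d with n parts, the element (∏_{i=1}^{n−1} x_i^{λ_i})·y^{d − d a_1 + λ_n} of K does not belong to A. -/

import Mathlib

open MvPolynomial Finset

noncomputable section

/-- `Kk p` is the fraction field of `ℂ[x_1,…,x_p, y]`, a polynomial ring in `p+1` variables
(so the paper's `n` is `p+1`). -/
abbrev Kk (p : ℕ) := FractionRing (MvPolynomial (Fin (p+1)) ℂ)

variable {p : ℕ}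

/-- the images `x_i` (for `i = 1, …, p`) in the fraction field -/
def xv (i : Fin p) : Kk p :=
  algebraMap (MvPolynomial (Fin (p+1)) ℂ) (Kk p) (X i.castSucc)

/-- the image of `y` in the fraction field -/
def yv : Kk p :=
  algebraMap (MvPolynomial (Fin (p+1)) ℂ) (Kk p) (X (Fin.last p))

/-- the coordinate ring `A = ℂ[x_1 y^{-a_1}, …, x_{n-1} y^{-a_{n-1}}, y^{-1}]`, i.e. the
ℂ-subalgebra of `K` generated by the `x_i y^{-a_i}` and `y^{-1}`. -/
def Asub (a : Fin p → ℤ) : Subalgebra ℂ (Kk p) :=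
  Algebra.adjoin ℂ ((Set.range fun i : Fin p => xv i * yv ^ (-(a i) : ℤ)) ∪ {yv⁻¹})

abbrev Rp (p : ℕ) := MvPolynomial (Fin (p+1)) ℂ

/-- the weight homomorphism -/
def wgt (a : Fin p → ℤ) : (Fin (p+1) →₀ ℕ) →+ ℤ :=
  AddMonoidHom.mk' (fun c => (c (Fin.last p) : ℤ) + ∑ i : Fin p, (c i.castSucc : ℤ) * a i)
    (by
      intro c d
      simp only [Finsupp.add_apply, Nat.cast_add, add_mul, Finset.sum_add_distrib]
      ring)

lemma wgt_single_last (a : Fin p → ℤ) (n : ℕ) :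
    wgt a (Finsupp.single (Fin.last p) n) = n := by
  have h : ∀ i : Fin p, Finsupp.single (Fin.last p) n i.castSucc = 0 := fun i =>
    Finsupp.single_eq_of_ne (Fin.castSucc_lt_last i).ne
  simp [wgt, h]

lemma wgt_single_cast (a : Fin p → ℤ) (i : Fin p) (n : ℕ) :
    wgt a (Finsupp.single i.castSucc n) = n * a i := by
  have hlast : Finsupp.single i.castSucc n (Fin.last p) = 0 :=
    Finsupp.single_eq_of_ne (Fin.castSucc_lt_last i).ne'
  simp only [wgt, AddMonoidHom.mk'_apply, hlast, Nat.cast_zero, zero_add]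
  rw [Finset.sum_eq_single i]
  · simp
  · intro j _ hj
    rw [Finsupp.single_eq_of_ne (fun h => hj (Fin.castSucc_injective _ h))]
    simp
  · simp

lemma wgt_prod_le (a : Fin p → ℤ) (g₁ g₂ : MvPolynomial (Fin (p+1)) ℂ) (N₁ N₂ : ℤ)
    (h₁ : ∀ c ∈ g₁.support, wgt a c ≤ N₁) (h₂ : ∀ c ∈ g₂.support, wgt a c ≤ N₂) :
    ∀ c ∈ (g₁ * g₂).support, wgt a c ≤ N₁ + N₂ := by
  intro c hc
  have := MvPolynomial.support_mul g₁ g₂ hc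
  rw [Finset.mem_add] at this
  obtain ⟨c₁, hc₁, c₂, hc₂, rfl⟩ := this
  rw [map_add]
  exact add_le_add (h₁ c₁ hc₁) (h₂ c₂ hc₂)

set_option maxHeartbeats 1000000 in
set_option synthInstance.maxHeartbeats 400000 in
/-- Under the ordering assumption `a_1 ≤ ⋯ ≤ a_m ≤ 0 < a_{m+1} ≤ ⋯ ≤ a_{n-1}` with
`1 ≤ m < n` and `a_1 < 0`, for every composition `λ` of `d` the element
`(∏_{i<n} x_i^{λ_i}) y^{d - d a_1 + λ_n}` does not lie in `A`.
(Here the paper's `n` is `p+1`, and indices `1,…,n-1` correspond to `Fin p`.) -/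
theorem monomial_not_mem_Asub (p d m : ℕ) (hp : 1 ≤ p) (hd : 1 ≤ d)
    (hm : 1 ≤ m) (hmn : m < p + 1)
    (a : Fin p → ℤ) (hsort : Monotone a)
    (ha1 : a ⟨0, hp⟩ < 0)
    (hnonpos : ∀ i : Fin p, (i : ℕ) < m → a i ≤ 0)
    (hpos : ∀ i : Fin p, m ≤ (i : ℕ) → 0 < a i)
    (lam : Fin (p+1) → ℕ) (hlam : ∑ i, lam i = d) :
    (∏ i : Fin p, xv i ^ lam i.castSucc) *
        yv ^ ((d : ℤ) - (d : ℤ) * a ⟨0, hp⟩ + (lam (Fin.last p) : ℤ)) ∉ Asub a := by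
  have hinj := IsFractionRing.injective (Rp p) (Kk p)
  have hy : (yv : Kk p) ≠ 0 := by
    simp only [yv, ne_eq, map_eq_zero_iff _ hinj]
    exact MvPolynomial.X_ne_zero (Fin.last p)
  have hYpow : ∀ N : ℕ, (yv : Kk p) ^ N = algebraMap (Rp p) (Kk p) (X (Fin.last p) ^ N) := by
    intro N; rw [map_pow]; rfl
  intro hmem
  -- the key invariant
  have key : ∀ z ∈ Asub a, ∃ N : ℕ, ∃ g : Rp p,
      z * yv ^ N = algebraMap (Rp p) (Kk p) g ∧ ∀ c ∈ g.support, wgt a c ≤ (N : ℤ) := by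
    intro z hz
    refine Algebra.adjoin_induction ?_ ?_ ?_ ?_ hz
    · rintro x (⟨i, rfl⟩ | hx)
      · have hX : ∀ (j : Fin (p+1)) (k : ℕ),
            (X j ^ k : Rp p) = monomial (Finsupp.single j k) 1 := fun j k => X_pow_eq_monomial
        rcases le_or_gt (a i) 0 with hai | hai
        · refine ⟨0, monomial (Finsupp.single i.castSucc 1 +
              Finsupp.single (Fin.last p) (-(a i)).toNat) 1, ?_, ?_⟩
          · have hpow : (yv : Kk p) ^ (-(a i) : ℤ) = yv ^ (-(a i)).toNat := by
              rw [← zpow_natCast, Int.toNat_of_nonneg (by omega)]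
            rw [← mul_one (1:ℂ), ← monomial_mul, map_mul, ← hX, ← hX, pow_one, map_pow]
            simp only [pow_zero, mul_one, hpow]
            rfl
          · intro c hc
            have := support_monomial_subset hc
            rw [Finset.mem_singleton] at this
            subst this
            rw [map_add, wgt_single_cast, wgt_single_last]
            push_cast [Int.toNat_of_nonneg (show (0:ℤ) ≤ -(a i) by omega)]
            omega
        · refine ⟨(a i).toNat, X i.castSucc, ?_, ?_⟩
          · have hpow : (yv : Kk p) ^ (-(a i) : ℤ) = (yv ^ (a i).toNat)⁻¹ := by
              rw [show (-(a i) : ℤ) = -(((a i).toNat : ℤ)) by omega, zpow_neg, zpow_natCast]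
            simp only [hpow]
            rw [mul_assoc, inv_mul_cancel₀ (pow_ne_zero _ hy), mul_one]
            rfl
          · intro c hc
            rw [show (X i.castSucc : Rp p) = monomial (Finsupp.single i.castSucc 1) 1 by
              rw [← hX, pow_one]] at hc
            have := support_monomial_subset hc
            rw [Finset.mem_singleton] at this
            subst this
            rw [wgt_single_cast]
            omega
      · rw [Set.mem_singleton_iff] at hx
        subst hx
        refine ⟨1, 1, ?_, ?_⟩
        · rw [pow_one, inv_mul_cancel₀ hy, map_one]
        · intro c hc
          rw [show (1:Rp p) = monomial 0 1 by simp] at hc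
          have := support_monomial_subset hc
          rw [Finset.mem_singleton] at this
          subst this
          simp [wgt]
    · intro r
      refine ⟨0, C r, ?_, ?_⟩
      · rw [pow_zero, mul_one, IsScalarTower.algebraMap_apply ℂ (Rp p) (Kk p)]
        rfl
      · intro c hc
        have := support_monomial_subset (by rwa [C_apply] at hc)
        rw [Finset.mem_singleton] at this
        subst this
        simp [wgt]
    · rintro x y - - ⟨N₁, g₁, he₁, hw₁⟩ ⟨N₂, g₂, he₂, hw₂⟩
      refine ⟨N₁ + N₂, g₁ * X (Fin.last p) ^ N₂ + g₂ * X (Fin.last p) ^ N₁, ?_, ?_⟩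
      · rw [add_mul, pow_add, ← mul_assoc, he₁,
          map_add (algebraMap (Rp p) (Kk p)), map_mul (algebraMap (Rp p) (Kk p)),
          show yv ^ N₁ * yv ^ N₂ = yv ^ N₂ * yv ^ N₁ from mul_comm _ _,
          ← mul_assoc, he₂, map_mul (algebraMap (Rp p) (Kk p)), ← hYpow, ← hYpow]
      · have hXp : ∀ N : ℕ, ∀ c ∈ (X (Fin.last p) ^ N : Rp p).support, wgt a c ≤ (N : ℤ) := by
          intro N c hc
          rw [X_pow_eq_monomial] at hc
          have := support_monomial_subset hc
          rw [Finset.mem_singleton] at this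
          subst this
          rw [wgt_single_last]
        intro c hc
        rcases Finset.mem_union.mp (MvPolynomial.support_add hc) with h | h
        · have := wgt_prod_le a g₁ _ N₁ N₂ hw₁ (hXp N₂) c h
          push_cast
          omega
        · have := wgt_prod_le a g₂ _ N₂ N₁ hw₂ (hXp N₁) c h
          push_cast
          omega
    · rintro x y - - ⟨N₁, g₁, he₁, hw₁⟩ ⟨N₂, g₂, he₂, hw₂⟩
      refine ⟨N₁ + N₂, g₁ * g₂, ?_, ?_⟩
      · rw [pow_add, show x * y * (yv ^ N₁ * yv ^ N₂) = (x * yv ^ N₁) * (y * yv ^ N₂) by ring,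
          he₁, he₂, map_mul (algebraMap (Rp p) (Kk p))]
      · intro c hc
        have := wgt_prod_le a g₁ g₂ N₁ N₂ hw₁ hw₂ c hc
        push_cast
        omega
  obtain ⟨N, g, heq, hwt⟩ := key _ hmem
  -- the target as a polynomial
  set a₁ := a ⟨0, hp⟩ with ha₁def
  set e : ℤ := (d : ℤ) - (d : ℤ) * a₁ + (lam (Fin.last p) : ℤ) with hedef
  have he : 0 < e := by
    have : a₁ ≤ -1 := by omega
    have hd' : (1:ℤ) ≤ d := by exact_mod_cast hd
    nlinarith [Int.natCast_nonneg (lam (Fin.last p))]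
  set σ0 : Fin (p+1) →₀ ℕ :=
    Finsupp.single (Fin.last p) e.toNat +
      ∑ i : Fin p, Finsupp.single i.castSucc (lam i.castSucc) with hσ0
  have hyE : (yv : Kk p) ^ e = yv ^ e.toNat := by
    rw [← zpow_natCast, Int.toNat_of_nonneg he.le]
  have h1 : algebraMap (Rp p) (Kk p) (monomial (Finsupp.single (Fin.last p) e.toNat) 1)
      = yv ^ e.toNat := by rw [← X_pow_eq_monomial, map_pow]; rfl
  have h2 : ∀ i : Fin p, algebraMap (Rp p) (Kk p)
        (monomial (Finsupp.single i.castSucc (lam i.castSucc)) 1) = xv i ^ lam i.castSucc :=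
    fun i => by rw [← X_pow_eq_monomial, map_pow]; rfl
  have htgt : (∏ i : Fin p, xv i ^ lam i.castSucc) * yv ^ e
      = algebraMap (Rp p) (Kk p) (monomial σ0 1) := by
    rw [hσ0, ← mul_one (1:ℂ), ← monomial_mul, monomial_sum_one,
      map_mul (algebraMap (Rp p) (Kk p)), map_prod, h1,
      Finset.prod_congr rfl (fun i _ => h2 i), hyE, mul_comm]
  rw [htgt, hYpow, ← map_mul (algebraMap (Rp p) (Kk p))] at heq
  have hg : monomial σ0 (1:ℂ) * X (Fin.last p) ^ N = g := hinj heq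
  have hmem' : σ0 + Finsupp.single (Fin.last p) N ∈ g.support := by
    rw [← hg, X_pow_eq_monomial, monomial_mul, mul_one, mem_support_iff, coeff_monomial,
      if_pos rfl]
    exact one_ne_zero
  have hle := hwt _ hmem'
  rw [map_add, wgt_single_last] at hle
  have hw0 : wgt a σ0 ≤ 0 := by omega
  -- but the weight of σ0 is positive
  rw [hσ0, map_add, wgt_single_last, map_sum] at hw0
  simp only [wgt_single_cast] at hw0
  have hsum : ∑ i : Fin p, (lam i.castSucc : ℤ) = (d : ℤ) - (lam (Fin.last p) : ℤ) := by
    have := hlam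
    rw [Fin.sum_univ_castSucc] at this
    push_cast [← this]
    ring
  have hbound : (a₁) * ((d : ℤ) - (lam (Fin.last p) : ℤ)) ≤
      ∑ i : Fin p, (lam i.castSucc : ℤ) * a i := by
    rw [← hsum, Finset.mul_sum]
    refine Finset.sum_le_sum fun i _ => ?_
    have hai : a₁ ≤ a i := hsort (by simp [Fin.le_def])
    nlinarith [Int.natCast_nonneg (lam i.castSucc)]
  have hE : (e.toNat : ℤ) = e := Int.toNat_of_nonneg he.le
  have hd' : (1:ℤ) ≤ d := by exact_mod_cast hd
  have hln : (0:ℤ) ≤ (lam (Fin.last p) : ℤ) := Int.natCast_nonneg _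
  have ha₁' : a₁ ≤ -1 := by omega
  nlinarith [hw0, hbound, hE]

end
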